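/- Let E be a real d×d matrix whose eigenvalues all have real parts ≥ a_d > 0, and let ℓ_d ≤ d be the dimension of the largest Jordan block with real part a_d. Then there exists C > 0 such that the operator norm of r^E satisfies ‖r^E‖ ≤ C r^{a_d} (|log r| ∨ 1)^{ℓ_d − 1} for all r ∈ (0,1). -/

import Mathlib

/-- For a real `d×d` matrix `E` and `r > 0`, `r^E := exp((log r) • E)`. -/
noncomputable def matPow {d : ℕ} (E : Matrix (Fin d) (Fin d) ℝ) (r : ℝ) :
    Matrix (Fin d) (Fin d) ℝ :=
  NormedSpace.exp ((Real.log r) • E)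


section AuxAll
open NormedSpace Finset

section Aux
variable {V : Type*} [NormedAddCommGroup V] [NormedSpace ℂ V] [CompleteSpace V]

set_option maxHeartbeats 1000000 in
lemma my_exp_apply_of_pow_eq_zero (T : V →L[ℂ] V) (μ : ℂ) (k : ℕ) (x : V)
    (hx : ((T - μ • 1) ^ k) x = 0) (t : ℝ) :
    exp ((t : ℂ) • T) x =
      Complex.exp (t * μ) •
        ∑ j ∈ range k, (((t : ℂ) ^ j * (j.factorial : ℂ)⁻¹) • (((T - μ • 1) ^ j) x)) := by
  set N : V →L[ℂ] V := T - μ • 1 with hN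
  have hTN : (t : ℂ) • T = ((t : ℂ) * μ) • (1 : V →L[ℂ] V) + (t : ℂ) • N := by
    rw [hN, smul_sub, mul_smul]
    simp [smul_smul, mul_comm]
  have hc : Commute (((t : ℂ) * μ) • (1 : V →L[ℂ] V)) ((t : ℂ) • N) :=
    ((Commute.one_left N).smul_left _).smul_right _
  have h1 : exp ((t : ℂ) • T)
      = algebraMap ℂ (V →L[ℂ] V) (Complex.exp (t * μ)) * exp ((t : ℂ) • N) := by
    letI : NormedAlgebra ℚ (V →L[ℂ] V) := .restrictScalars ℚ ℂ _
    rw [hTN, exp_add_of_commute hc, Complex.exp_eq_exp_ℂ, algebraMap_exp_comm,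
      Algebra.algebraMap_eq_smul_one]
  have h2 : exp ((t : ℂ) • N) x
      = ∑ j ∈ range k, (((t : ℂ) ^ j * (j.factorial : ℂ)⁻¹) • (N ^ j) x) := by
    have hsum : HasSum (fun n : ℕ => ((n.factorial : ℂ)⁻¹ • ((t : ℂ) • N) ^ n))
        (exp ((t : ℂ) • N)) := exp_series_hasSum_exp' _
    have happ : HasSum (fun n : ℕ => ((n.factorial : ℂ)⁻¹ • ((t : ℂ) • N) ^ n) x)
        (exp ((t : ℂ) • N) x) := by
      have h := (ContinuousLinearMap.apply ℂ V x).hasSum hsum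
      simpa only [ContinuousLinearMap.apply_apply] using h
    have hzero : ∀ n ∉ range k, ((n.factorial : ℂ)⁻¹ • ((t : ℂ) • N) ^ n) x = 0 := by
      intro n hn
      rw [mem_range, not_lt] at hn
      have hNn : (N : V →L[ℂ] V) ^ n = N ^ (n - k) * N ^ k := by
        rw [← pow_add]; congr 1; omega
      rw [smul_pow]
      simp only [ContinuousLinearMap.smul_apply, hNn, ContinuousLinearMap.mul_apply, hx,
        map_zero, smul_zero]
    rw [← happ.tsum_eq, tsum_eq_sum hzero]
    refine Finset.sum_congr rfl fun j hj => ?_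
    rw [smul_pow]
    simp only [ContinuousLinearMap.smul_apply]
    rw [smul_smul, mul_comm]
  rw [h1]
  rw [Algebra.algebraMap_eq_smul_one, smul_mul_assoc, one_mul,
    ContinuousLinearMap.smul_apply, h2]

lemma my_norm_exp_apply_le (T : V →L[ℂ] V) (μ : ℂ) (k : ℕ) (x : V)
    (hx : ((T - μ • 1) ^ k) x = 0) (t : ℝ) :
    ‖exp ((t : ℂ) • T) x‖ ≤
      Real.exp (t * μ.re) *
        (∑ j ∈ range k, (j.factorial : ℝ)⁻¹ * ‖(T - μ • 1) ^ j‖) *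
        (max |t| 1) ^ (k - 1) * ‖x‖ := by
  have hform := my_exp_apply_of_pow_eq_zero T μ k x hx t
  set N : V →L[ℂ] V := T - μ • 1 with hN
  set m := max |t| 1 with hm
  have hm1 : (1:ℝ) ≤ m := le_max_right _ _
  have habs : ‖Complex.exp ((t:ℂ) * μ)‖ = Real.exp (t * μ.re) := by
    rw [Complex.norm_exp]
    norm_num
  rw [hform, norm_smul, habs]
  have hsum : ‖∑ j ∈ range k, (((t:ℂ)^j * (j.factorial:ℂ)⁻¹) • ((N^j) x))‖
      ≤ (∑ j ∈ range k, (j.factorial : ℝ)⁻¹ * ‖N ^ j‖) * m ^ (k-1) * ‖x‖ := by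
    refine le_trans (norm_sum_le _ _) ?_
    rw [Finset.sum_mul, Finset.sum_mul]
    refine Finset.sum_le_sum fun j hj => ?_
    rw [norm_smul, norm_mul, norm_pow, norm_inv]
    have h0 : ‖(t:ℂ)‖ = |t| := by rw [Complex.norm_real, Real.norm_eq_abs]
    have h00 : ‖(j.factorial : ℂ)‖ = (j.factorial : ℝ) := by
      rw [Complex.norm_natCast]
    rw [h0, h00]
    have h2 : |t|^j ≤ m^(k-1) := by
      have h2a : |t|^j ≤ m^j := pow_le_pow_left₀ (abs_nonneg t) (le_max_left _ _) j
      exact le_trans h2a (pow_le_pow_right₀ hm1 (by rw [mem_range] at hj; omega))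
    have h3 : ‖(N^j) x‖ ≤ ‖N^j‖ * ‖x‖ := ContinuousLinearMap.le_opNorm _ _
    calc |t|^j * ((j.factorial:ℝ))⁻¹ * ‖(N^j) x‖
        ≤ m^(k-1) * ((j.factorial:ℝ))⁻¹ * (‖N^j‖ * ‖x‖) := by gcongr
      _ = (j.factorial:ℝ)⁻¹ * ‖N^j‖ * m^(k-1) * ‖x‖ := by ring
  calc Real.exp (t*μ.re) * ‖∑ j ∈ range k, (((t:ℂ)^j * (j.factorial:ℂ)⁻¹) • ((N^j) x))‖
      ≤ Real.exp (t*μ.re) * ((∑ j ∈ range k, (j.factorial : ℝ)⁻¹ * ‖N ^ j‖) * m ^ (k-1) * ‖x‖) :=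
        mul_le_mul_of_nonneg_left hsum (Real.exp_nonneg _)
    _ = Real.exp (t*μ.re) * (∑ j ∈ range k, (j.factorial : ℝ)⁻¹ * ‖N ^ j‖) * m ^ (k-1) * ‖x‖ := by
        ring

end Aux

lemma my_exp_mul_max_pow_le {b : ℝ} (hb : 0 < b) (n : ℕ) {t : ℝ} (ht : t ≤ 0) :
    Real.exp (t * b) * (max |t| 1) ^ n ≤ (n.factorial : ℝ) / b ^ n + 1 := by
  have hfb : (0:ℝ) < (n.factorial : ℝ) / b ^ n := by positivity
  rcases le_total |t| 1 with h1 | h1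
  · rw [max_eq_right h1, one_pow, mul_one]
    have : Real.exp (t * b) ≤ 1 := by
      rw [Real.exp_le_one_iff]
      exact mul_nonpos_of_nonpos_of_nonneg ht hb.le
    linarith
  · rw [max_eq_left h1]
    have habs : |t| = -t := abs_of_nonpos ht
    set u := -t with hu
    have hu1 : (1:ℝ) ≤ u := by rw [← habs]; exact h1
    have hu0 : (0:ℝ) < u := lt_of_lt_of_le one_pos hu1
    have hbu : (0:ℝ) < b * u := by positivity
    have h2 : (b*u)^n / n.factorial ≤ Real.exp (b*u) := by
      refine le_trans ?_ (Real.sum_le_exp_of_nonneg hbu.le (n+1))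
      exact Finset.single_le_sum (f := fun i => (b*u)^i / i.factorial)
        (fun i _ => by positivity) (self_mem_range_succ n)
    have h3 : Real.exp (t * b) = (Real.exp (b*u))⁻¹ := by
      rw [← Real.exp_neg]; congr 1; rw [hu]; ring
    have h4 : (Real.exp (b*u))⁻¹ ≤ (n.factorial : ℝ) / (b*u)^n := by
      rw [← inv_div]
      exact inv_anti₀ (by positivity) h2
    have h5 : Real.exp (t*b) * |t|^n ≤ (n.factorial : ℝ) / b^n := by
      rw [h3, habs]
      calc (Real.exp (b*u))⁻¹ * u^n ≤ ((n.factorial : ℝ) / (b*u)^n) * u^n := by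
            gcongr
        _ = (n.factorial : ℝ) / b^n := by
            rw [mul_pow]; field_simp
    linarith

section Mat
variable {d : ℕ}

lemma my_conj_pow (A : Matrix (Fin d) (Fin d) ℂ) (μ : ℂ) (k : ℕ) (y : Fin d → ℂ) :
    ((Matrix.toEuclideanCLM (𝕜 := ℂ) A - μ • 1) ^ k) ((WithLp.equiv 2 _).symm y)
      = (WithLp.equiv 2 _).symm
          (((Matrix.toLin' A - μ • (1 : Module.End ℂ (Fin d → ℂ))) ^ k) y) := by
  have h1 : (Matrix.toEuclideanCLM (𝕜 := ℂ) A - μ • 1)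
      = Matrix.toEuclideanCLM (𝕜 := ℂ) (A - μ • 1) := by
    rw [map_sub, map_smul, map_one]
  have h2 : (Matrix.toEuclideanCLM (𝕜 := ℂ) A - μ • 1) ^ k
      = Matrix.toEuclideanCLM (𝕜 := ℂ) ((A - μ • 1) ^ k) := by
    rw [h1, map_pow]
  have h3 : Matrix.toLin' ((A - μ • 1) ^ k)
      = (Matrix.toLin' A - μ • (1 : Module.End ℂ (Fin d → ℂ))) ^ k := by
    have e1 : ∀ B : Matrix (Fin d) (Fin d) ℂ, Matrix.toLin' B = Matrix.toLinAlgEquiv' B :=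
      fun B => rfl
    rw [e1, map_pow, map_sub, map_smul, map_one, ← e1]
  rw [h2, ← h3]; rfl

lemma my_key1 (A : Matrix (Fin d) (Fin d) ℂ) (a : ℝ)
    (hE' : ∀ μ ∈ spectrum ℂ A, a ≤ μ.re) (ℓ : ℕ)
    (hJordan' : ∀ μ ∈ spectrum ℂ A, μ.re = a →
      Module.End.genEigenspace (Matrix.toLin' A) μ (ℓ : ℕ∞) =
        Module.End.maxGenEigenspace (Matrix.toLin' A) μ)
    (μ : ℂ) (y : Fin d → ℂ) (hy : y ∈ Module.End.maxGenEigenspace (Matrix.toLin' A) μ) :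
    ∃ C : ℝ, 0 ≤ C ∧ ∀ t : ℝ, t ≤ 0 →
      ‖exp ((t:ℂ) • (Matrix.toEuclideanCLM (𝕜 := ℂ) A :
          EuclideanSpace ℂ (Fin d) →L[ℂ] EuclideanSpace ℂ (Fin d)))
        ((WithLp.equiv 2 (Fin d → ℂ)).symm y)‖ ≤
        C * Real.exp (t * a) * (max |t| 1) ^ (ℓ - 1) := by
  set T : EuclideanSpace ℂ (Fin d) →L[ℂ] EuclideanSpace ℂ (Fin d) :=
    Matrix.toEuclideanCLM (𝕜 := ℂ) A with hT
  rcases eq_or_ne y 0 with rfl | hy0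
  · refine ⟨0, le_refl 0, fun t ht => ?_⟩
    have h0 : ((WithLp.equiv 2 (Fin d → ℂ)).symm (0 : Fin d → ℂ)) = 0 := rfl
    rw [h0, map_zero, norm_zero, zero_mul, zero_mul]
  obtain ⟨k, hk⟩ := Module.End.mem_genEigenspace_top.mp hy
  have hk0 : 0 < k := by
    rcases Nat.eq_zero_or_pos k with rfl | h
    · exfalso; apply hy0; simpa using hk
    · exact h
  have hμA : μ ∈ spectrum ℂ A := by
    have hsp : spectrum ℂ (Matrix.toLin' A) = spectrum ℂ A :=
      AlgEquiv.spectrum_eq (Matrix.toLinAlgEquiv' (R := ℂ) (n := Fin d)) A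
    rw [← hsp, ← Module.End.hasEigenvalue_iff_mem_spectrum]
    refine (Module.End.hasGenEigenvalue_iff_hasEigenvalue hk0).mp ?_
    refine (Submodule.ne_bot_iff _).mpr ⟨y, ?_, hy0⟩
    exact Module.End.mem_genEigenspace_nat.mpr hk
  set x : EuclideanSpace ℂ (Fin d) := (WithLp.equiv 2 (Fin d → ℂ)).symm y with hx
  have hSnn : ∀ K : ℕ, (0:ℝ) ≤ ∑ j ∈ range K, (j.factorial : ℝ)⁻¹ * ‖(T - μ • 1) ^ j‖ :=
    fun K => Finset.sum_nonneg fun j _ => by positivity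
  rcases eq_or_lt_of_le (hE' μ hμA) with hre | hre
  · -- μ.re = a
    have hJ := hJordan' μ hμA hre.symm
    have hyℓ : ((Matrix.toLin' A - μ • (1 : Module.End ℂ (Fin d → ℂ))) ^ ℓ) y = 0 := by
      have hmem : y ∈ Module.End.genEigenspace (Matrix.toLin' A) μ (ℓ : ℕ∞) := by
        rw [hJ]; exact hy
      exact LinearMap.mem_ker.mp (Module.End.mem_genEigenspace_nat.mp hmem)
    have hTx : ((T - μ • 1) ^ ℓ) x = 0 := by
      rw [hx, hT, my_conj_pow A μ ℓ y, hyℓ]; rfl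
    refine ⟨(∑ j ∈ range ℓ, (j.factorial : ℝ)⁻¹ * ‖(T - μ • 1) ^ j‖) * ‖x‖,
      mul_nonneg (hSnn ℓ) (norm_nonneg _), fun t ht => ?_⟩
    have hb := my_norm_exp_apply_le T μ ℓ x hTx t
    rw [← hre] at hb
    calc ‖exp ((t:ℂ) • T) x‖
        ≤ Real.exp (t * a) * (∑ j ∈ range ℓ, (j.factorial : ℝ)⁻¹ * ‖(T - μ • 1) ^ j‖) *
            (max |t| 1) ^ (ℓ - 1) * ‖x‖ := hb
      _ = (∑ j ∈ range ℓ, (j.factorial : ℝ)⁻¹ * ‖(T - μ • 1) ^ j‖) * ‖x‖ *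
            Real.exp (t * a) * (max |t| 1) ^ (ℓ - 1) := by ring
  · -- a < μ.re
    have hba : (0:ℝ) < μ.re - a := sub_pos.mpr hre
    have hyk : ((Matrix.toLin' A - μ • (1 : Module.End ℂ (Fin d → ℂ))) ^ k) y = 0 :=
      LinearMap.mem_ker.mp hk
    have hTx : ((T - μ • 1) ^ k) x = 0 := by
      rw [hx, hT, my_conj_pow A μ k y, hyk]; rfl
    set S := ∑ j ∈ range k, (j.factorial : ℝ)⁻¹ * ‖(T - μ • 1) ^ j‖ with hS
    set K := (((k - ℓ).factorial : ℝ) / (μ.re - a) ^ (k - ℓ) + 1) with hK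
    have hK0 : (0:ℝ) ≤ K := by
      rw [hK]
      have : (0:ℝ) < (μ.re - a) ^ (k - ℓ) := pow_pos hba _
      have h1 : (0:ℝ) ≤ ((k - ℓ).factorial : ℝ) / (μ.re - a) ^ (k - ℓ) :=
        div_nonneg (by positivity) this.le
      linarith
    refine ⟨S * ‖x‖ * K, mul_nonneg (mul_nonneg (hSnn k) (norm_nonneg _)) hK0,
      fun t ht => ?_⟩
    have hb := my_norm_exp_apply_le T μ k x hTx t
    set m := max |t| 1 with hm
    have hm1 : (1:ℝ) ≤ m := le_max_right _ _
    have hm0 : (0:ℝ) ≤ m := le_trans zero_le_one hm1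
    have hsplit : Real.exp (t * μ.re) = Real.exp (t * a) * Real.exp (t * (μ.re - a)) := by
      rw [← Real.exp_add]; congr 1; ring
    have hmle : m ^ (k - 1) ≤ m ^ (ℓ - 1) * m ^ (k - ℓ) := by
      rw [← pow_add]; exact pow_le_pow_right₀ hm1 (by omega)
    have hKb : Real.exp (t * (μ.re - a)) * m ^ (k - ℓ) ≤ K := by
      rw [hK, hm]; exact my_exp_mul_max_pow_le hba (k - ℓ) ht
    have hexp0 : (0:ℝ) ≤ Real.exp (t * μ.re) * S :=
      mul_nonneg (Real.exp_nonneg _) (hSnn k)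
    calc ‖exp ((t:ℂ) • T) x‖
        ≤ Real.exp (t * μ.re) * S * m ^ (k - 1) * ‖x‖ := hb
      _ ≤ Real.exp (t * μ.re) * S * (m ^ (ℓ - 1) * m ^ (k - ℓ)) * ‖x‖ :=
          mul_le_mul_of_nonneg_right (mul_le_mul_of_nonneg_left hmle hexp0) (norm_nonneg _)
      _ = (Real.exp (t * (μ.re - a)) * m ^ (k - ℓ)) * (S * ‖x‖ * Real.exp (t * a) *
            m ^ (ℓ - 1)) := by rw [hsplit]; ring
      _ ≤ K * (S * ‖x‖ * Real.exp (t * a) * m ^ (ℓ - 1)) :=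
          mul_le_mul_of_nonneg_right hKb (by positivity)
      _ = S * ‖x‖ * K * Real.exp (t * a) * m ^ (ℓ - 1) := by ring

end Mat


variable {d : ℕ}

lemma my_coord_le_norm {𝕜 : Type*} [RCLike 𝕜] (y : EuclideanSpace 𝕜 (Fin d)) (i : Fin d) :
    ‖y i‖ ≤ ‖y‖ := by
  rw [EuclideanSpace.norm_eq]
  have h1 : ‖y i‖ ^ 2 ≤ ∑ j, ‖y j‖ ^ 2 :=
    Finset.single_le_sum (f := fun j => ‖y j‖ ^ 2) (fun j _ => by positivity) (mem_univ i)
  calc ‖y i‖ = Real.sqrt (‖y i‖ ^ 2) := (Real.sqrt_sq (norm_nonneg _)).symm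
    _ ≤ Real.sqrt (∑ j, ‖y j‖ ^ 2) := Real.sqrt_le_sqrt h1

lemma my_norm_le_sum_coord {𝕜 : Type*} [RCLike 𝕜] (y : EuclideanSpace 𝕜 (Fin d)) :
    ‖y‖ ≤ ∑ i, ‖y i‖ := by
  rw [EuclideanSpace.norm_eq]
  have h1 : ∑ j, ‖y j‖ ^ 2 ≤ (∑ j, ‖y j‖) ^ 2 :=
    Finset.sum_sq_le_sq_sum_of_nonneg (fun j _ => norm_nonneg _)
  calc Real.sqrt (∑ j, ‖y j‖ ^ 2) ≤ Real.sqrt ((∑ j, ‖y j‖) ^ 2) := Real.sqrt_le_sqrt h1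
    _ = ∑ j, ‖y j‖ := Real.sqrt_sq (by positivity)

lemma my_opNorm_le_sum_abs (M : Matrix (Fin d) (Fin d) ℝ) :
    ‖(Matrix.toEuclideanCLM (𝕜 := ℝ) M :
        EuclideanSpace ℝ (Fin d) →L[ℝ] EuclideanSpace ℝ (Fin d))‖ ≤ ∑ i, ∑ j, |M i j| := by
  refine ContinuousLinearMap.opNorm_le_bound _ (by positivity) fun x => ?_
  have hcoord : ∀ i, (Matrix.toEuclideanCLM (𝕜 := ℝ) M x) i = ∑ j, M i j * x j := by
    intro i
    have h := Matrix.ofLp_toEuclideanCLM (𝕜 := ℝ) M x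
    have h2 : (Matrix.toEuclideanCLM (𝕜 := ℝ) M x) i
        = (Matrix.toLin' M (WithLp.equiv 2 _ x)) i := by
      rfl
    rw [h2, Matrix.toLin'_apply]
    rfl
  calc ‖Matrix.toEuclideanCLM (𝕜 := ℝ) M x‖
      ≤ ∑ i, ‖(Matrix.toEuclideanCLM (𝕜 := ℝ) M x) i‖ := my_norm_le_sum_coord _
    _ ≤ ∑ i, ∑ j, |M i j| * ‖x‖ := by
        refine Finset.sum_le_sum fun i _ => ?_
        rw [hcoord i, Real.norm_eq_abs]
        refine le_trans (Finset.abs_sum_le_sum_abs _ _) ?_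
        refine Finset.sum_le_sum fun j _ => ?_
        rw [abs_mul]
        have : |x j| ≤ ‖x‖ := by
          have := my_coord_le_norm x j
          simpa [Real.norm_eq_abs] using this
        exact mul_le_mul_of_nonneg_left this (abs_nonneg _)
    _ = (∑ i, ∑ j, |M i j|) * ‖x‖ := by
        rw [Finset.sum_mul]
        exact Finset.sum_congr rfl fun i _ => (Finset.sum_mul _ _ _).symm

lemma my_abs_entry_le (A : Matrix (Fin d) (Fin d) ℂ) (i j : Fin d) :
    ‖A i j‖ ≤ ‖(Matrix.toEuclideanCLM (𝕜 := ℂ) A :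
        EuclideanSpace ℂ (Fin d) →L[ℂ] EuclideanSpace ℂ (Fin d))‖ := by
  set x : EuclideanSpace ℂ (Fin d) := (WithLp.equiv 2 _).symm (Pi.single j 1) with hxdef
  have hx1 : ‖x‖ = 1 := by
    rw [hxdef]
    have : ((WithLp.equiv 2 (Fin d → ℂ)).symm (Pi.single j 1) : EuclideanSpace ℂ (Fin d))
        = EuclideanSpace.single j (1:ℂ) := rfl
    rw [this, EuclideanSpace.norm_single, norm_one]
  have happ : Matrix.toEuclideanCLM (𝕜 := ℂ) A x
      = (WithLp.equiv 2 _).symm (Matrix.toLin' A (Pi.single j 1)) := by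
    rw [hxdef]
    exact Matrix.toEuclideanCLM_toLp A _
  have hentry : (Matrix.toEuclideanCLM (𝕜 := ℂ) A x) i = A i j := by
    rw [happ]
    show (Matrix.toLin' A (Pi.single j 1)) i = A i j
    rw [Matrix.toLin'_apply, Matrix.mulVec_single]
    simp
  calc ‖A i j‖ = ‖(Matrix.toEuclideanCLM (𝕜 := ℂ) A x) i‖ := by rw [hentry]
    _ ≤ ‖Matrix.toEuclideanCLM (𝕜 := ℂ) A x‖ := my_coord_le_norm _ i
    _ ≤ ‖(Matrix.toEuclideanCLM (𝕜 := ℂ) A : EuclideanSpace ℂ (Fin d) →L[ℂ] _)‖ * ‖x‖ :=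
        ContinuousLinearMap.le_opNorm _ _
    _ = _ := by rw [hx1, mul_one]

lemma my_map_exp_ofReal (M : Matrix (Fin d) (Fin d) ℝ) :
    (exp M).map Complex.ofReal = exp (M.map Complex.ofReal) := by
  letI : SeminormedRing (Matrix (Fin d) (Fin d) ℝ) := Matrix.linftyOpSemiNormedRing
  letI : NormedRing (Matrix (Fin d) (Fin d) ℝ) := Matrix.linftyOpNormedRing
  letI : NormedAlgebra ℝ (Matrix (Fin d) (Fin d) ℝ) := Matrix.linftyOpNormedAlgebra
  letI : SeminormedRing (Matrix (Fin d) (Fin d) ℂ) := Matrix.linftyOpSemiNormedRing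
  letI : NormedRing (Matrix (Fin d) (Fin d) ℂ) := Matrix.linftyOpNormedRing
  letI : NormedAlgebra ℝ (Matrix (Fin d) (Fin d) ℂ) := Matrix.linftyOpNormedAlgebra
  letI : NormedAlgebra ℚ (Matrix (Fin d) (Fin d) ℝ) := .restrictScalars ℚ ℝ _
  letI : NormedAlgebra ℚ (Matrix (Fin d) (Fin d) ℂ) := .restrictScalars ℚ ℝ _
  have hcont : Continuous (⇑(Complex.ofRealHom.mapMatrix (m := Fin d))) := by
    have : Continuous fun M : Matrix (Fin d) (Fin d) ℝ => M.map Complex.ofReal :=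
      continuous_id.matrix_map Complex.continuous_ofReal
    exact this
  have h := map_exp (Complex.ofRealHom.mapMatrix (m := Fin d)) hcont M
  exact h

lemma my_exp_R_eq_C (B : Matrix (Fin d) (Fin d) ℂ) : exp B = exp B :=
  rfl

lemma my_toEuclideanCLM_exp (B : Matrix (Fin d) (Fin d) ℂ) :
    Matrix.toEuclideanCLM (𝕜 := ℂ) (exp B)
      = exp (Matrix.toEuclideanCLM (𝕜 := ℂ) B :
          EuclideanSpace ℂ (Fin d) →L[ℂ] EuclideanSpace ℂ (Fin d)) := by
  letI : SeminormedRing (Matrix (Fin d) (Fin d) ℂ) := Matrix.linftyOpSemiNormedRing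
  letI : NormedRing (Matrix (Fin d) (Fin d) ℂ) := Matrix.linftyOpNormedRing
  letI : NormedAlgebra ℂ (Matrix (Fin d) (Fin d) ℂ) := Matrix.linftyOpNormedAlgebra
  have hcont : Continuous (⇑(Matrix.toEuclideanCLM (𝕜 := ℂ) (n := Fin d))) := by
    let L : Matrix (Fin d) (Fin d) ℂ →ₗ[ℂ]
        (EuclideanSpace ℂ (Fin d) →L[ℂ] EuclideanSpace ℂ (Fin d)) :=
      { toFun := ⇑(Matrix.toEuclideanCLM (𝕜 := ℂ) (n := Fin d)),
        map_add' := fun x y => map_add _ x y,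
        map_smul' := fun c x => map_smul _ c x }
    exact L.continuous_of_finiteDimensional
  letI : NormedAlgebra ℚ (Matrix (Fin d) (Fin d) ℂ) := .restrictScalars ℚ ℂ _
  letI : NormedAlgebra ℚ (EuclideanSpace ℂ (Fin d) →L[ℂ] EuclideanSpace ℂ (Fin d)) :=
    .restrictScalars ℚ ℂ _
  have h := map_exp ((Matrix.toEuclideanCLM (𝕜 := ℂ) (n := Fin d)).toRingEquiv) hcont B
  exact h

lemma my_key2 (A : Matrix (Fin d) (Fin d) ℂ) (a : ℝ)
    (hE' : ∀ μ ∈ spectrum ℂ A, a ≤ μ.re) (ℓ : ℕ)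
    (hJordan' : ∀ μ ∈ spectrum ℂ A, μ.re = a →
      Module.End.genEigenspace (Matrix.toLin' A) μ (ℓ : ℕ∞) =
        Module.End.maxGenEigenspace (Matrix.toLin' A) μ) :
    ∃ C0 : ℝ, 0 < C0 ∧ ∀ t : ℝ, t ≤ 0 →
      ‖exp ((t:ℂ) • (Matrix.toEuclideanCLM (𝕜 := ℂ) A :
          EuclideanSpace ℂ (Fin d) →L[ℂ] EuclideanSpace ℂ (Fin d)))‖ ≤
        C0 * Real.exp (t * a) * (max |t| 1) ^ (ℓ - 1) := by
  set T : EuclideanSpace ℂ (Fin d) →L[ℂ] EuclideanSpace ℂ (Fin d) :=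
    Matrix.toEuclideanCLM (𝕜 := ℂ) A with hT
  -- pointwise bound
  have hpt : ∀ x : EuclideanSpace ℂ (Fin d), ∃ C : ℝ, 0 ≤ C ∧ ∀ t : ℝ, t ≤ 0 →
      ‖exp ((t:ℂ) • T) x‖ ≤ C * Real.exp (t * a) * (max |t| 1) ^ (ℓ - 1) := by
    intro x
    have htop : (WithLp.equiv 2 (Fin d → ℂ)) x ∈
        ⨆ μ : ℂ, Module.End.maxGenEigenspace (Matrix.toLin' A) μ := by
      rw [Module.End.iSup_maxGenEigenspace_eq_top]
      trivial
    have hind := Submodule.iSup_induction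
      (motive := fun y : Fin d → ℂ => ∃ C : ℝ, 0 ≤ C ∧ ∀ t : ℝ, t ≤ 0 →
        ‖exp ((t:ℂ) • T) ((WithLp.equiv 2 (Fin d → ℂ)).symm y)‖ ≤
          C * Real.exp (t * a) * (max |t| 1) ^ (ℓ - 1))
      (fun μ : ℂ => Module.End.maxGenEigenspace (Matrix.toLin' A) μ) htop
      (fun μ y hy => my_key1 A a hE' ℓ hJordan' μ y hy)
      (by
        refine ⟨0, le_refl 0, fun t ht => ?_⟩
        have h0 : ((WithLp.equiv 2 (Fin d → ℂ)).symm (0 : Fin d → ℂ)) = 0 := rfl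
        rw [h0, map_zero, norm_zero, zero_mul, zero_mul])
      (by
        rintro y z ⟨C₁, hC₁, h₁⟩ ⟨C₂, hC₂, h₂⟩
        refine ⟨C₁ + C₂, by linarith, fun t ht => ?_⟩
        have hadd : ((WithLp.equiv 2 (Fin d → ℂ)).symm (y + z))
            = (WithLp.equiv 2 (Fin d → ℂ)).symm y + (WithLp.equiv 2 (Fin d → ℂ)).symm z := rfl
        rw [hadd, map_add]
        refine le_trans (norm_add_le _ _) ?_
        have := add_le_add (h₁ t ht) (h₂ t ht)
        calc ‖exp ((t:ℂ) • T) ((WithLp.equiv 2 (Fin d → ℂ)).symm y)‖ +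
              ‖exp ((t:ℂ) • T) ((WithLp.equiv 2 (Fin d → ℂ)).symm z)‖
            ≤ C₁ * Real.exp (t * a) * (max |t| 1) ^ (ℓ - 1) +
              C₂ * Real.exp (t * a) * (max |t| 1) ^ (ℓ - 1) := this
          _ = (C₁ + C₂) * Real.exp (t * a) * (max |t| 1) ^ (ℓ - 1) := by ring)
    obtain ⟨C, hC0, hC⟩ := hind
    refine ⟨C, hC0, fun t ht => ?_⟩
    have hxy : ((WithLp.equiv 2 (Fin d → ℂ)).symm ((WithLp.equiv 2 (Fin d → ℂ)) x)) = x := rfl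
    have := hC t ht
    rwa [hxy] at this
  have hcpos : ∀ t : ℝ, 0 < Real.exp (t * a) * (max |t| 1) ^ (ℓ - 1) := fun t => by
    have h : (0:ℝ) < max |t| 1 := lt_of_lt_of_le one_pos (le_max_right _ _)
    positivity
  have hbdd : ∀ x : EuclideanSpace ℂ (Fin d), ∃ C : ℝ, ∀ t : {t : ℝ // t ≤ 0},
      ‖((fun s : {t : ℝ // t ≤ 0} =>
          (Real.exp ((s:ℝ) * a) * (max |(s:ℝ)| 1) ^ (ℓ - 1))⁻¹ •
            exp (((s:ℝ) : ℂ) • T)) t) x‖ ≤ C := by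
    intro x
    obtain ⟨C, hC0, hC⟩ := hpt x
    refine ⟨C, fun t => ?_⟩
    have h1 : ((fun s : {t : ℝ // t ≤ 0} =>
          (Real.exp ((s:ℝ) * a) * (max |(s:ℝ)| 1) ^ (ℓ - 1))⁻¹ •
            exp (((s:ℝ) : ℂ) • T)) t) x
        = (Real.exp ((t:ℝ) * a) * (max |(t:ℝ)| 1) ^ (ℓ - 1))⁻¹ •
            (exp (((t:ℝ) : ℂ) • T) x) := rfl
    rw [h1, norm_smul, Real.norm_eq_abs, abs_of_pos (inv_pos.mpr (hcpos (t:ℝ)))]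
    have h2 := hC (t : ℝ) t.2
    rw [mul_assoc] at h2
    calc (Real.exp ((t:ℝ) * a) * (max |(t:ℝ)| 1) ^ (ℓ - 1))⁻¹ * ‖exp (((t:ℝ) : ℂ) • T) x‖
        ≤ (Real.exp ((t:ℝ) * a) * (max |(t:ℝ)| 1) ^ (ℓ - 1))⁻¹ *
            (C * (Real.exp ((t:ℝ) * a) * (max |(t:ℝ)| 1) ^ (ℓ - 1))) :=
          mul_le_mul_of_nonneg_left h2 (inv_pos.mpr (hcpos (t:ℝ))).le
      _ = C := by
          field_simp
  obtain ⟨C', hC'⟩ := banach_steinhaus hbdd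
  refine ⟨max C' 1, lt_of_lt_of_le one_pos (le_max_right _ _), fun t ht => ?_⟩
  have h1 : ‖(Real.exp (t * a) * (max |t| 1) ^ (ℓ - 1))⁻¹ • exp ((t : ℂ) • T)‖ ≤ C' :=
    hC' ⟨t, ht⟩
  have h2 : ‖(Real.exp (t * a) * (max |t| 1) ^ (ℓ - 1))⁻¹ • exp ((t : ℂ) • T)‖
      = (Real.exp (t * a) * (max |t| 1) ^ (ℓ - 1))⁻¹ * ‖exp ((t : ℂ) • T)‖ := by
    have hns := norm_smul (α := ℝ)
      ((Real.exp (t * a) * (max |t| 1) ^ (ℓ - 1))⁻¹) (exp ((t : ℂ) • T))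
    rw [Real.norm_eq_abs, abs_of_pos (inv_pos.mpr (hcpos t))] at hns
    exact hns
  rw [h2] at h1
  have hcp := hcpos t
  have h3 : ‖exp ((t : ℂ) • T)‖ ≤ C' * (Real.exp (t * a) * (max |t| 1) ^ (ℓ - 1)) := by
    have h4 := mul_le_mul_of_nonneg_right h1 hcp.le
    rw [mul_comm ((Real.exp (t * a) * (max |t| 1) ^ (ℓ - 1))⁻¹) _, mul_assoc,
      inv_mul_cancel₀ hcp.ne', mul_one] at h4
    exact h4
  calc ‖exp ((t : ℂ) • T)‖ ≤ C' * (Real.exp (t * a) * (max |t| 1) ^ (ℓ - 1)) := h3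
    _ ≤ (max C' 1) * (Real.exp (t * a) * (max |t| 1) ^ (ℓ - 1)) :=
        mul_le_mul_of_nonneg_right (le_max_left _ _) hcp.le
    _ = (max C' 1) * Real.exp (t * a) * (max |t| 1) ^ (ℓ - 1) := by ring

end AuxAll

open NormedSpace Finset in
/-- If all eigenvalues of `E` have real part `≥ a_d > 0`, and every Jordan block of an
eigenvalue with real part `a_d` has size at most `ℓ` (generalized eigenspaces stabilize
at exponent `ℓ`), then `‖r^E‖ ≤ C r^{a_d} (|log r| ∨ 1)^{ℓ-1}` for `r ∈ (0,1)`. -/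
theorem opNorm_matPow_small_r {d : ℕ} (E : Matrix (Fin d) (Fin d) ℝ)
    (a : ℝ) (ha : 0 < a)
    (hE : ∀ μ ∈ spectrum ℂ (E.map (Complex.ofReal)), a ≤ μ.re)
    (ℓ : ℕ) (hℓ1 : 1 ≤ ℓ) (hℓd : ℓ ≤ d)
    (hJordan : ∀ μ ∈ spectrum ℂ (E.map (Complex.ofReal)), μ.re = a →
      Module.End.genEigenspace (Matrix.toLin' (E.map (Complex.ofReal))) μ (ℓ : ℕ∞) =
        Module.End.maxGenEigenspace (Matrix.toLin' (E.map (Complex.ofReal))) μ) :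
    ∃ C : ℝ, 0 < C ∧ ∀ r ∈ Set.Ioo (0 : ℝ) 1,
      ‖(Matrix.toEuclideanCLM (𝕜 := ℝ) (matPow E r) :
          EuclideanSpace ℝ (Fin d) →L[ℝ] EuclideanSpace ℝ (Fin d))‖ ≤
        C * r ^ a * (max |Real.log r| 1) ^ (ℓ - 1) := by
  obtain ⟨C0, hC0pos, hC0⟩ := my_key2 (E.map Complex.ofReal) a hE ℓ hJordan
  refine ⟨(d * d : ℝ) * C0 + 1,
    add_pos_of_nonneg_of_pos (mul_nonneg (by positivity) hC0pos.le) one_pos,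
    fun r hr => ?_⟩
  obtain ⟨hr0, hr1⟩ := hr
  have ht : Real.log r ≤ 0 := (Real.log_neg hr0 hr1).le
  have hid : Matrix.toEuclideanCLM (𝕜 := ℂ) ((matPow E r).map Complex.ofReal)
      = exp (((Real.log r : ℝ) : ℂ) •
          (Matrix.toEuclideanCLM (𝕜 := ℂ) (E.map Complex.ofReal) :
            EuclideanSpace ℂ (Fin d) →L[ℂ] EuclideanSpace ℂ (Fin d))) := by
    have h1 : (matPow E r).map Complex.ofReal = exp ((Real.log r • E).map Complex.ofReal) :=
      my_map_exp_ofReal (Real.log r • E)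
    have h2 : (Real.log r • E).map Complex.ofReal
        = ((Real.log r : ℝ) : ℂ) • (E.map Complex.ofReal) := by
      ext i j
      simp [Matrix.map_apply, Matrix.smul_apply, smul_eq_mul, Complex.ofReal_mul]
    calc Matrix.toEuclideanCLM (𝕜 := ℂ) ((matPow E r).map Complex.ofReal)
        = Matrix.toEuclideanCLM (𝕜 := ℂ)
            (exp (((Real.log r : ℝ) : ℂ) • E.map Complex.ofReal)) := by
          rw [h1, h2, my_exp_R_eq_C]
      _ = exp (Matrix.toEuclideanCLM (𝕜 := ℂ)
            (((Real.log r : ℝ) : ℂ) • E.map Complex.ofReal) :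
              EuclideanSpace ℂ (Fin d) →L[ℂ] EuclideanSpace ℂ (Fin d)) :=
          my_toEuclideanCLM_exp _
      _ = exp (((Real.log r : ℝ) : ℂ) •
            (Matrix.toEuclideanCLM (𝕜 := ℂ) (E.map Complex.ofReal) :
              EuclideanSpace ℂ (Fin d) →L[ℂ] EuclideanSpace ℂ (Fin d))) := by
          rw [map_smul]
  set X : EuclideanSpace ℂ (Fin d) →L[ℂ] EuclideanSpace ℂ (Fin d) :=
    exp (((Real.log r : ℝ) : ℂ) •
      (Matrix.toEuclideanCLM (𝕜 := ℂ) (E.map Complex.ofReal) :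
        EuclideanSpace ℂ (Fin d) →L[ℂ] EuclideanSpace ℂ (Fin d))) with hX
  have hnorm : ‖(Matrix.toEuclideanCLM (𝕜 := ℝ) (matPow E r) :
      EuclideanSpace ℝ (Fin d) →L[ℝ] EuclideanSpace ℝ (Fin d))‖ ≤ (d * d : ℝ) * ‖X‖ := by
    refine le_trans (my_opNorm_le_sum_abs (matPow E r)) ?_
    have hentry : ∀ i j, |matPow E r i j| ≤ ‖X‖ := by
      intro i j
      have h := my_abs_entry_le ((matPow E r).map Complex.ofReal) i j
      rw [hid] at h
      have heq : ‖((matPow E r).map Complex.ofReal) i j‖ = |matPow E r i j| := by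
        rw [Matrix.map_apply, Complex.norm_real, Real.norm_eq_abs]
      rwa [heq] at h
    calc ∑ i, ∑ j, |matPow E r i j| ≤ ∑ _i : Fin d, ∑ _j : Fin d, ‖X‖ :=
          Finset.sum_le_sum fun i _ => Finset.sum_le_sum fun j _ => hentry i j
      _ = (d * d : ℝ) * ‖X‖ := by
          rw [Finset.sum_const, Finset.sum_const, Finset.card_univ, Fintype.card_fin,
            smul_smul, nsmul_eq_mul]
          push_cast
          ring
  have hbound := hC0 (Real.log r) ht
  have hrpow : Real.exp (Real.log r * a) = r ^ a := (Real.rpow_def_of_pos hr0 a).symm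
  calc ‖(Matrix.toEuclideanCLM (𝕜 := ℝ) (matPow E r) :
      EuclideanSpace ℝ (Fin d) →L[ℝ] EuclideanSpace ℝ (Fin d))‖
      ≤ (d * d : ℝ) * ‖X‖ := hnorm
    _ ≤ (d * d : ℝ) * (C0 * Real.exp (Real.log r * a) * (max |Real.log r| 1) ^ (ℓ - 1)) :=
        mul_le_mul_of_nonneg_left hbound (by positivity)
    _ = ((d * d : ℝ) * C0) * (r ^ a) * (max |Real.log r| 1) ^ (ℓ - 1) := by
        rw [hrpow]; ring
    _ ≤ ((d * d : ℝ) * C0 + 1) * (r ^ a) * (max |Real.log r| 1) ^ (ℓ - 1) := by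
        have h1 : (0:ℝ) ≤ r ^ a := Real.rpow_nonneg hr0.le a
        have h2 : (0:ℝ) ≤ (max |Real.log r| 1) ^ (ℓ - 1) := by positivity
        have h3 : (d * d : ℝ) * C0 ≤ (d * d : ℝ) * C0 + 1 := by linarith
        exact mul_le_mul_of_nonneg_right
          (mul_le_mul_of_nonneg_right h3 h1) h2
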